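/- Let A = [[a₁₁, a₁₂], [a₁₂, a₂₂]] ∈ M₂(ℝ) be symmetric and B = [[1, x], [x, 1]] ∈ M₂(ℝ) with |x| < 1, and set t := √(1 − x²). Assume d := 2·a₁₂ − (a₁₁ + a₂₂)·x ≠ 0, and put c₂ := t·(a₂₂ − a₁₁)/d. Define tϑ := σ/(|c₂| + √(1 + c₂²)) where σ := 1 if c₂ ≥ 0 and σ := −1 if c₂ < 0; cϑ := 1/√(1 + tϑ²); sϑ := tϑ·cϑ; ξ := x/(√(1 + x) + √(1 − x)); η := x/((1 + √(1 + x))·(1 + √(1 − x))); cφ := cϑ + ξ·(sϑ − η·cϑ); cψ := cϑ − ξ·(sϑ + η·cϑ); sφ := sϑ − ξ·(cϑ + η·sϑ); sψ := sϑ + ξ·(cϑ − η·sϑ). Then the matrix Z := (1/t)·[[cφ, sφ], [−sψ, cψ]] satisfies Zᵀ B Z = I₂ and Zᵀ A Z is a diagonal matrix. -/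

import Mathlib

open Matrix

set_option maxHeartbeats 1000000 in
theorem stmt_3 (a11 a12 a22 x : ℝ) (hx : |x| < 1)
    (A B : Matrix (Fin 2) (Fin 2) ℝ)
    (hA : A = !![a11, a12; a12, a22])
    (hB : B = !![1, x; x, 1])
    (t : ℝ) (ht : t = Real.sqrt (1 - x ^ 2))
    (d : ℝ) (hd : d = 2 * a12 - (a11 + a22) * x) (hd0 : d ≠ 0)
    (c2 : ℝ) (hc2 : c2 = t * (a22 - a11) / d)
    (σ : ℝ) (hσ : σ = if 0 ≤ c2 then 1 else -1)
    (tϑ : ℝ) (htϑ : tϑ = σ / (|c2| + Real.sqrt (1 + c2 ^ 2)))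
    (cϑ : ℝ) (hcϑ : cϑ = 1 / Real.sqrt (1 + tϑ ^ 2))
    (sϑ : ℝ) (hsϑ : sϑ = tϑ * cϑ)
    (ξ : ℝ) (hξ : ξ = x / (Real.sqrt (1 + x) + Real.sqrt (1 - x)))
    (η : ℝ) (hη : η = x / ((1 + Real.sqrt (1 + x)) * (1 + Real.sqrt (1 - x))))
    (cφ cψ sφ sψ : ℝ)
    (hcφ : cφ = cϑ + ξ * (sϑ - η * cϑ))
    (hcψ : cψ = cϑ - ξ * (sϑ + η * cϑ))
    (hsφ : sφ = sϑ - ξ * (cϑ + η * sϑ))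
    (hsψ : sψ = sϑ + ξ * (cϑ - η * sϑ))
    (Z : Matrix (Fin 2) (Fin 2) ℝ)
    (hZ : Z = (1 / t) • !![cφ, sφ; -sψ, cψ]) :
    Zᵀ * B * Z = 1 ∧ (Zᵀ * A * Z).IsDiag := by
  obtain ⟨hx1, hx2⟩ := abs_lt.mp hx
  set p := Real.sqrt (1+x) with hp_def
  set q := Real.sqrt (1-x) with hq_def
  have hp0 : 0 < p := Real.sqrt_pos.mpr (by linarith)
  have hq0 : 0 < q := Real.sqrt_pos.mpr (by linarith)
  have hp2 : p^2 = 1+x := Real.sq_sqrt (by linarith)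
  have hq2 : q^2 = 1-x := Real.sq_sqrt (by linarith)
  have hpq : p^2 + q^2 = 2 := by linarith
  have hx' : x = (p^2 - q^2)/2 := by linarith
  have htpq : t = p*q := by
    rw [ht, show (1:ℝ)-x^2 = (1+x)*(1-x) by ring, Real.sqrt_mul (by linarith)]
  have ht0 : t ≠ 0 := by rw [htpq]; positivity
  -- trigonometric facts
  have hsq2 : Real.sqrt (1+tϑ^2)^2 = 1 + tϑ^2 := Real.sq_sqrt (by positivity)
  have hcs : cϑ^2 + sϑ^2 = 1 := by
    rw [hsϑ, hcϑ]; field_simp; exact hsq2.symm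
  have hr2 : Real.sqrt (1+c2^2)^2 = 1+c2^2 := Real.sq_sqrt (by positivity)
  have hr0 : 0 < |c2| + Real.sqrt (1+c2^2) :=
    add_pos_of_nonneg_of_pos (abs_nonneg _) (Real.sqrt_pos.mpr (by positivity))
  have hσc : σ * c2 = |c2| := by
    rw [hσ]; split
    · rw [abs_of_nonneg (by assumption)]; ring
    · rw [abs_of_neg (by linarith [not_le.mp (by assumption)])]; ring
  have hσ2 : σ^2 = 1 := by rw [hσ]; split <;> norm_num
  have habs : |c2|^2 = c2^2 := sq_abs c2
  have hprod : (|c2| + Real.sqrt (1+c2^2)) * (Real.sqrt (1+c2^2) - |c2|) = 1 := by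
    linear_combination hr2 - habs
  have htϑ' : tϑ = σ * (Real.sqrt (1+c2^2) - |c2|) := by
    rw [htϑ, eq_comm, eq_div_iff hr0.ne']; linear_combination σ * hprod
  have htan : tϑ^2 + 2*c2*tϑ = 1 := by
    rw [htϑ']
    linear_combination ((Real.sqrt (1+c2^2) - |c2|)^2) * hσ2 +
      2*(Real.sqrt (1+c2^2) - |c2|) * hσc + hr2 - habs
  have hF2 : cϑ^2 - sϑ^2 = 2*c2*(cϑ*sϑ) := by
    rw [hsϑ]; linear_combination (-cϑ^2) * htan
  -- half-angle forms
  have hξ' : ξ = (p-q)/2 := by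
    rw [hξ, div_eq_div_iff (by positivity) (by norm_num)]
    linear_combination -hp2 + hq2
  have hξη : ξ*η = (2-p-q)/2 := by
    rw [hξ, hη, div_mul_div_comm, div_eq_div_iff (by positivity) (by norm_num)]
    linear_combination (-1 + q + 2*q^2 + p + p*q) * hp2 + (1 + 2*x + q + p + p*q) * hq2
  have hcφ' : cφ = ((p+q)*cϑ + (p-q)*sϑ)/2 := by
    rw [hcφ]; linear_combination sϑ*hξ' - cϑ*hξη
  have hcψ' : cψ = ((p+q)*cϑ - (p-q)*sϑ)/2 := by
    rw [hcψ]; linear_combination (-sϑ)*hξ' - cϑ*hξη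
  have hsφ' : sφ = ((p+q)*sϑ - (p-q)*cϑ)/2 := by
    rw [hsφ]; linear_combination (-cϑ)*hξ' - sϑ*hξη
  have hsψ' : sψ = ((p+q)*sϑ + (p-q)*cϑ)/2 := by
    rw [hsψ]; linear_combination cϑ*hξ' - sϑ*hξη
  -- key scalar identities
  have hc2d : c2 * d = t*(a22-a11) := by rw [hc2]; field_simp
  have hK : c2*(4*a12 - (a11+a22)*(p^2-q^2)) = 2*(p*q)*(a22-a11) := by
    linear_combination 2*hc2d - 2*c2*hd + 2*(a22-a11)*htpq + 2*c2*(a11+a22)*hx'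
  have S1 : cφ^2 - 2*x*(cφ*sψ) + sψ^2 = t^2 := by
    rw [hcφ', hsψ', htpq]
    linear_combination ((1/2)*q^2*sϑ^2 - q^2*cϑ*sϑ + (1/2)*q^2*cϑ^2 - (1/2)*p^2*sϑ^2
        - p^2*cϑ*sϑ - (1/2)*p^2*cϑ^2) * hx'
      + ((1/2)*q^2 - (1/4)*q^4 + (1/2)*p^2 + (1/2)*p^2*q^2 - (1/4)*p^4) * hcs
      + ((-1/4)*q^2 + (1/2)*q^2*cϑ*sϑ - (1/4)*p^2 - (1/2)*p^2*cϑ*sϑ) * hpq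
  have S2 : sφ^2 + 2*x*(sφ*cψ) + cψ^2 = t^2 := by
    rw [hsφ', hcψ', htpq]
    linear_combination ((1/2)*q^2*sϑ^2 + q^2*cϑ*sϑ + (1/2)*q^2*cϑ^2 - (1/2)*p^2*sϑ^2
        + p^2*cϑ*sϑ - (1/2)*p^2*cϑ^2) * hx'
      + ((1/2)*q^2 - (1/4)*q^4 + (1/2)*p^2 + (1/2)*p^2*q^2 - (1/4)*p^4) * hcs
      + ((-1/4)*q^2 - (1/2)*q^2*cϑ*sϑ - (1/4)*p^2 + (1/2)*p^2*cϑ*sϑ) * hpq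
  have S3 : cφ*sφ + x*(cφ*cψ) - x*(sφ*sψ) - sψ*cψ = 0 := by
    rw [hcφ', hsφ', hcψ', hsψ']
    linear_combination ((-1/2)*q^2*sϑ^2 + (1/2)*q^2*cϑ^2 - (1/2)*p^2*sϑ^2 + (1/2)*p^2*cϑ^2) * hx'
      + ((1/2)*q^2 - (1/4)*q^4 - (1/2)*p^2 + (1/4)*p^4) * hcs
      + ((-1/4)*q^2 + (1/2)*q^2*sϑ^2 + (1/4)*p^2 - (1/2)*p^2*sϑ^2) * hpq
  have S4 : a11*(cφ*sφ) + a12*(cφ*cψ) - a12*(sφ*sψ) - a22*(sψ*cψ) = 0 := by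
    rw [hcφ', hsφ', hcψ', hsψ']
    linear_combination (cϑ*sϑ/2)*hK + ((4*a12-(a11+a22)*(p^2-q^2))/4)*hF2
      + (-a12 + (1/2)*q^2*a12 + (1/2)*p^2*a12)*hcs + ((1/2)*a12 - sϑ^2*a12)*hpq
  constructor
  · rw [hZ, hB]
    ext i j
    fin_cases i <;> fin_cases j <;>
      simp [Matrix.mul_apply, Fin.sum_univ_two, Matrix.transpose_apply, Matrix.vecHead, Matrix.vecTail] <;>
      field_simp [ht0]
    · linear_combination S1
    · linear_combination S3
    · linear_combination S3
    · linear_combination S2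
  · rw [hZ, hA]
    intro i j hij
    fin_cases i <;> fin_cases j
    · exact absurd rfl hij
    · simp [Matrix.mul_apply, Fin.sum_univ_two, Matrix.transpose_apply, Matrix.vecHead, Matrix.vecTail]
      field_simp [ht0]
      linear_combination S4
    · simp [Matrix.mul_apply, Fin.sum_univ_two, Matrix.transpose_apply, Matrix.vecHead, Matrix.vecTail]
      field_simp [ht0]
      linear_combination S4
    · exact absurd rfl hij
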